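/- Let R be a Noetherian local domain with fraction field K, I ⊆ R a nonzero ideal, and suppose the integral closure of the Rees algebra R[It] in R[t] is a finite R[It]-module (e.g. R excellent). Then there exists a positive integer n_0 such that for all n ≥ 1, the ideal (overline{I^{n_0}})^n is integrally closed, where overline{J} denotes the integral closure of an ideal J. -/

import Mathlib

/-- `a` is integral over the ideal `I`: it satisfies an equation
`a^n + c₁ a^{n-1} + ⋯ + cₙ = 0` with `cᵢ ∈ I^i`. -/
def IsIntegralOverIdeal {R : Type*} [CommRing R] (I : Ideal R) (a : R) : Prop :=
  ∃ n : ℕ, 0 < n ∧ ∃ c : ℕ → R, (∀ i : ℕ, 1 ≤ i → i ≤ n → c i ∈ I ^ i) ∧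
    a ^ n + ∑ i ∈ Finset.Icc 1 n, c i * a ^ (n - i) = 0

open Polynomial

set_option maxHeartbeats 4000000
set_option synthInstance.maxHeartbeats 800000

section Aux

variable {R : Type*} [CommRing R] (I : Ideal R)


theorem mem_icl_of_mem_rees {x : R[X]} (hx : x ∈ reesAlgebra I) :
    x ∈ integralClosure (reesAlgebra I) R[X] :=
  show IsIntegral _ _ from (isIntegral_algebraMap (x := (⟨x, hx⟩ : reesAlgebra I)))

def Abar (m : ℕ) : Ideal R where
  carrier := {a | (C a * X ^ m : R[X]) ∈ integralClosure (reesAlgebra I) R[X]}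
  zero_mem' := by
    simp only [Set.mem_setOf_eq, map_zero, zero_mul]
    exact Subalgebra.zero_mem _
  add_mem' := by
    intro a b ha hb
    have h : (C (a + b) * X ^ m : R[X]) = C a * X ^ m + C b * X ^ m := by rw [C_add]; ring
    simp only [Set.mem_setOf_eq] at *
    rw [h]; exact Subalgebra.add_mem _ ha hb
  smul_mem' := by
    intro r a ha
    have h : (C (r • a) * X ^ m : R[X]) = C r * (C a * X ^ m) := by rw [smul_eq_mul, C_mul]; ring
    simp only [Set.mem_setOf_eq] at *
    rw [h]
    exact Subalgebra.mul_mem _ (mem_icl_of_mem_rees I ((reesAlgebra I).algebraMap_mem r)) ha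

theorem mem_Abar_iff {m : ℕ} {a : R} :
    a ∈ Abar I m ↔ (C a * X ^ m : R[X]) ∈ integralClosure (reesAlgebra I) R[X] := Iff.rfl

theorem pow_le_Abar (j : ℕ) : I ^ j ≤ Abar I j := by
  intro a ha
  rw [mem_Abar_iff, C_mul_X_pow_eq_monomial]
  exact mem_icl_of_mem_rees I (reesAlgebra.monomial_mem.mpr ha)

theorem Abar_mul_le (i j : ℕ) : Abar I i * Abar I j ≤ Abar I (i + j) := by
  rw [Ideal.mul_le]
  intro a ha b hb
  rw [mem_Abar_iff] at *
  have h : (C (a * b) * X ^ (i + j) : R[X]) = (C a * X ^ i) * (C b * X ^ j) := by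
    rw [C_mul, pow_add]; ring
  rw [h]; exact Subalgebra.mul_mem _ ha hb

theorem sum_ideal_le {s : Finset ℕ} {f : ℕ → Ideal R} {K : Ideal R}
    (h : ∀ d ∈ s, f d ≤ K) : ∑ d ∈ s, f d ≤ K := by
  classical
  induction s using Finset.induction with
  | empty => simpa using bot_le
  | @insert i s his ih =>
    rw [Finset.sum_insert his]
    refine sup_le (h i (Finset.mem_insert_self i s)) (ih fun d hd => h d (Finset.mem_insert_of_mem hd))

/-- The Veronese lemma: there is `n₀ ≥ 1` with `Abar I (n₀ * n) ≤ (Abar I n₀) ^ n`. -/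
theorem veronese [IsNoetherianRing R]
    (hfin : Module.Finite (reesAlgebra I) (integralClosure (reesAlgebra I) (Polynomial R))) :
    ∃ n₀ : ℕ, 0 < n₀ ∧ ∀ n : ℕ, 1 ≤ n → Abar I (n₀ * n) ≤ (Abar I n₀) ^ n := by
  classical
  set A := reesAlgebra I with hA
  set S := integralClosure (reesAlgebra I) (Polynomial R) with hS
  have hnoeth : IsNoetherian A S := isNoetherian_of_isNoetherianRing_of_finite A S
  -- the chain of submodules generated by homogeneous elements of degree ≤ k
  set M : ℕ →o Submodule A S :=
    ⟨fun k => Submodule.span A {x : S | ∃ m ≤ k, ∃ a ∈ Abar I m, (x : R[X]) = C a * X ^ m},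
     by
      intro j k hjk
      apply Submodule.span_mono
      rintro x ⟨m, hm, a, ha, hx⟩
      exact ⟨m, le_trans hm hjk, a, ha, hx⟩⟩ with hM
  obtain ⟨N, hN⟩ := monotone_stabilizes_iff_noetherian.mpr hnoeth M
  -- the target ideals
  set T : ℕ → Ideal R := fun j => ∑ d ∈ Finset.range (N + 1), I ^ (j - d) * Abar I d with hT
  -- every element of M N has all its coefficients in the right ideals
  have hQ : ∀ x ∈ M N, ∀ j : ℕ, ((x : R[X])).coeff j ∈ T j := by
    intro x hx
    refine Submodule.span_induction ?_ ?_ ?_ ?_ hx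
    · rintro x ⟨m, hm, a, ha, hxeq⟩ j
      rw [hxeq, coeff_C_mul, coeff_X_pow]
      by_cases hjm : j = m
      · subst hjm
        have h1 : I ^ (j - j) * Abar I j ≤ T j :=
          Finset.single_le_sum (f := fun d => I ^ (j - d) * Abar I d)
            (fun d _ => bot_le) (Finset.mem_range.mpr (by omega))
        apply h1
        rw [Nat.sub_self, pow_zero, one_mul]
        simpa using ha
      · simp [hjm]
    · intro j; simp
    · intro x y _ _ hx hy j
      have h : (((x + y : S) : R[X])).coeff j = ((x : R[X])).coeff j + ((y : R[X])).coeff j := by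
        push_cast; rw [coeff_add]
      rw [h]; exact Ideal.add_mem _ (hx j) (hy j)
    · intro f x _ hx j
      have h : ((f • x : S) : R[X]) = (f : R[X]) * (x : R[X]) := rfl
      rw [h, coeff_mul]
      apply Ideal.sum_mem
      rintro ⟨u, v⟩ huv
      rw [Finset.HasAntidiagonal.mem_antidiagonal] at huv
      have hf : ((f : R[X])).coeff u ∈ I ^ u := f.2 u
      have hx2 : ((x : R[X])).coeff v ∈ T v := hx v
      have key : I ^ u * T v ≤ T j := by
        rw [hT]
        dsimp only
        rw [Finset.mul_sum]
        apply Finset.sum_le_sum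
        intro d _
        rw [← mul_assoc, ← pow_add]
        exact Ideal.mul_mono (Ideal.pow_le_pow_right (by omega)) le_rfl
      exact key (Ideal.mul_mem_mul hf hx2)
  -- conclusion
  refine ⟨N + 1, Nat.succ_pos N, fun n hn => ?_⟩
  rcases Nat.lt_or_ge n 2 with hn2 | hn2
  · have : n = 1 := by omega
    subst this
    rw [Nat.mul_one, pow_one]
  · intro a ha
    have hxS : (C a * X ^ ((N + 1) * n) : R[X]) ∈ S := ha
    have hxN : (⟨C a * X ^ ((N + 1) * n), hxS⟩ : S) ∈ M N := by
      rw [hN ((N + 1) * n) (by nlinarith)]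
      exact Submodule.subset_span ⟨(N + 1) * n, le_rfl, a, ha, rfl⟩
    have hco : a ∈ T ((N + 1) * n) := by
      have h5 := hQ _ hxN ((N + 1) * n)
      have hcoeq : ((C a * X ^ ((N + 1) * n) : R[X])).coeff ((N + 1) * n) = a := by
        rw [coeff_C_mul, coeff_X_pow, if_pos rfl, mul_one]
      rwa [hcoeq] at h5
    -- now show T m ≤ (Abar I (N+1)) ^ n
    have hTle : T ((N + 1) * n) ≤ (Abar I (N + 1)) ^ n := by
      rw [hT]
      dsimp only
      apply sum_ideal_le
      intro d hd
      rw [Finset.mem_range] at hd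
      have hdm : (N + 1) * n - d = (N + 1) * (n - 1) + (N + 1 - d) := by
        have h1 : d ≤ N + 1 := by omega
        have h2 : (N+1) * (n-1) + (N + 1) = (N+1) * n := by
          rw [← Nat.mul_succ]
          congr 1
          omega
        omega
      rw [hdm, pow_add, mul_assoc]
      have h3 : I ^ ((N + 1) * (n - 1)) ≤ (Abar I (N + 1)) ^ (n - 1) := by
        rw [pow_mul]
        exact Ideal.pow_right_mono (pow_le_Abar I (N + 1)) _
      have h4 : I ^ (N + 1 - d) * Abar I d ≤ Abar I (N + 1) := by
        refine le_trans (Ideal.mul_mono (pow_le_Abar I (N + 1 - d)) le_rfl) ?_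
        refine le_trans (Abar_mul_le I (N + 1 - d) d) ?_
        rw [Nat.sub_add_cancel (by omega)]
      refine le_trans (Ideal.mul_mono h3 h4) ?_
      rw [← pow_succ, show (n - 1) + 1 = n by omega]
    exact hTle hco

theorem top_le_Abar_zero : (⊤ : Ideal R) ≤ Abar I 0 := by
  intro a _
  rw [mem_Abar_iff, pow_zero, mul_one]
  exact mem_icl_of_mem_rees I ((reesAlgebra I).algebraMap_mem a)

theorem Abar_pow_le (m j : ℕ) : (Abar I m) ^ j ≤ Abar I (m * j) := by
  induction j with
  | zero => rw [pow_zero, Nat.mul_zero]; exact le_trans le_top (top_le_Abar_zero I)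
  | succ k ih =>
    rw [pow_succ, Nat.mul_succ]
    exact le_trans (Ideal.mul_mono ih le_rfl) (Abar_mul_le I _ _)

theorem aux_integral_mem {m : ℕ} {a : R} (k : ℕ) (hk : 0 < k) (c : ℕ → R)
    (hmem : ∀ i ∈ Finset.Icc 1 k,
      (C (c i) * X ^ (m * i) : R[X]) ∈ integralClosure (reesAlgebra I) R[X])
    (heq : a ^ k + ∑ i ∈ Finset.Icc 1 k, c i * a ^ (k - i) = 0) :
    (C a * X ^ m : R[X]) ∈ integralClosure (reesAlgebra I) R[X] := by
  classical
  set S := integralClosure (reesAlgebra I) R[X] with hS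
  set p : R[X] := C a * X ^ m with hp
  set d : ℕ → S := fun i =>
    if h : i ∈ Finset.Icc 1 k then ⟨C (c i) * X ^ (m * i), hmem i h⟩ else 0 with hd
  set q : Polynomial S := X ^ k + ∑ i ∈ Finset.Icc 1 k, C (d i) * X ^ (k - i) with hq
  have hmonic : q.Monic := by
    apply Polynomial.monic_X_pow_add
    apply lt_of_le_of_lt (Polynomial.degree_sum_le _ _)
    rw [Finset.sup_lt_iff (by exact_mod_cast WithBot.bot_lt_coe k)]
    intro i hi
    apply lt_of_le_of_lt (Polynomial.degree_C_mul_X_pow_le _ _)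
    rw [Finset.mem_Icc] at hi
    exact_mod_cast Nat.sub_lt (by omega) hi.1
  have haeval : Polynomial.aeval p q = 0 := by
    have coe_pow : ∀ j : ℕ, p ^ j = C (a ^ j) * X ^ (m * j) := by
      intro j
      rw [hp, mul_pow, ← C_pow, ← pow_mul]
    rw [hq, map_add, map_pow, Polynomial.aeval_X, map_sum]
    have : ∀ i ∈ Finset.Icc 1 k,
        Polynomial.aeval p (C (d i) * X ^ (k - i)) = C (c i * a ^ (k - i)) * X ^ (m * k) := by
      intro i hi
      rw [Finset.mem_Icc] at hi
      rw [map_mul, map_pow, Polynomial.aeval_X, Polynomial.aeval_C, hd]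
      simp only [Finset.mem_Icc, hi, and_self, dif_pos]
      show (C (c i) * X ^ (m * i) : R[X]) * p ^ (k - i) = _
      rw [coe_pow]
      have hmk : m * i + m * (k - i) = m * k := by
        rw [← Nat.left_distrib, Nat.add_sub_cancel' hi.2]
      rw [show (C (c i) * X ^ (m * i) * (C (a ^ (k - i)) * X ^ (m * (k - i))) : R[X])
        = C (c i * a ^ (k - i)) * X ^ (m * i + m * (k-i)) by rw [pow_add, C_mul]; ring, hmk]
    rw [Finset.sum_congr rfl this, ← Finset.sum_mul, ← map_sum, coe_pow]
    rw [show (C (a ^ k) * X ^ (m * k) + C (∑ i ∈ Finset.Icc 1 k, c i * a ^ (k - i)) * X ^ (m*k) : R[X])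
      = C (a ^ k + ∑ i ∈ Finset.Icc 1 k, c i * a ^ (k - i)) * X ^ (m*k) by rw [C_add]; ring, heq]
    simp
  have hint : IsIntegral S p := ⟨q, hmonic, by rwa [Polynomial.aeval_def] at haeval⟩
  exact isIntegral_trans (R := reesAlgebra I) (A := S) p hint

theorem mem_Abar_of_isIntegralOverIdeal {J : Ideal R} {m : ℕ}
    (hJ : ∀ i : ℕ, J ^ i ≤ Abar I (m * i)) {a : R}
    (ha : IsIntegralOverIdeal J a) : a ∈ Abar I m := by
  obtain ⟨k, hk, c, hc, heq⟩ := ha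
  exact aux_integral_mem I k hk c
    (fun i hi => by
      rw [Finset.mem_Icc] at hi
      exact hJ i (hc i hi.1 hi.2)) heq

variable [Nontrivial R]


theorem isIntegralOverIdeal_of_mem {m : ℕ} {a : R}
    (ha : (C a * X ^ m : R[X]) ∈ integralClosure (reesAlgebra I) R[X]) :
    IsIntegralOverIdeal (I ^ m) a := by
  classical
  obtain ⟨q, hqm, hq0⟩ := ha
  set k := q.natDegree with hk
  set f := algebraMap (reesAlgebra I) R[X] with hf
  have hk1 : 1 ≤ k := by
    by_contra h
    have hq1 : q = 1 := hqm.natDegree_eq_zero.mp (by omega)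
    rw [hq1, Polynomial.eval₂_one] at hq0
    exact one_ne_zero hq0
  have hexp : (0 : R[X]) = ∑ i ∈ Finset.range (k + 1), f (q.coeff i) * (C a * X ^ m) ^ i := by
    rw [← hq0, Polynomial.eval₂_eq_sum_range]
  -- take the coefficient at m * k
  have hco : (0 : R) = ∑ i ∈ Finset.range (k + 1),
      ((f (q.coeff i) : R[X])).coeff (m * (k - i)) * a ^ i := by
    have h2 := congrArg (fun g : R[X] => g.coeff (m * k)) hexp
    simp only [Polynomial.coeff_zero, Polynomial.finset_sum_coeff] at h2
    rw [h2]
    apply Finset.sum_congr rfl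
    intro i hi
    rw [Finset.mem_range] at hi
    have hile : i ≤ k := by omega
    rw [show ((C a * X ^ m : R[X]) ^ i) = C (a ^ i) * X ^ (m * i) by
      rw [mul_pow, ← C_pow, ← pow_mul]]
    rw [show (f (q.coeff i) * (C (a ^ i) * X ^ (m * i)) : R[X])
      = (f (q.coeff i) * C (a ^ i)) * X ^ (m * i) by ring]
    rw [Polynomial.coeff_mul_X_pow', if_pos (Nat.mul_le_mul_left m hile),
      Polynomial.coeff_mul_C]
    congr 2
    rw [Nat.mul_sub_left_distrib]
  -- the coefficients of elements of the Rees algebra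
  have hrees : ∀ i : ℕ, ((f (q.coeff i) : R[X])).coeff (m * (k - i)) ∈ (I ^ m) ^ (k - i) := by
    intro i
    have : (f (q.coeff i) : R[X]) ∈ reesAlgebra I := (q.coeff i).2
    rw [← pow_mul]
    exact this (m * (k - i))
  refine ⟨k, hk1, fun i => ((f (q.coeff (k - i)) : R[X])).coeff (m * i), ?_, ?_⟩
  · intro i h1 h2
    have : k - (k - i) = i := by omega
    have h3 := hrees (k - i)
    rwa [this] at h3
  · -- reindex the sum
    have hsplit : ∑ i ∈ Finset.range (k + 1),
        ((f (q.coeff i) : R[X])).coeff (m * (k - i)) * a ^ i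
        = a ^ k + ∑ i ∈ Finset.range k,
          ((f (q.coeff i) : R[X])).coeff (m * (k - i)) * a ^ i := by
      rw [Finset.sum_range_succ, add_comm]
      congr 1
      have : q.coeff k = 1 := hqm.coeff_natDegree
      rw [this, Nat.sub_self, Nat.mul_zero, map_one]
      simp
    have hreidx : ∑ i ∈ Finset.range k,
        ((f (q.coeff i) : R[X])).coeff (m * (k - i)) * a ^ i
        = ∑ i ∈ Finset.Icc 1 k,
          ((f (q.coeff (k - i)) : R[X])).coeff (m * i) * a ^ (k - i) := by
      apply Finset.sum_nbij' (fun i => k - i) (fun i => k - i)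
      · intro i hi; rw [Finset.mem_range] at hi; rw [Finset.mem_Icc]; omega
      · intro i hi; rw [Finset.mem_Icc] at hi; rw [Finset.mem_range]; omega
      · intro i hi; rw [Finset.mem_range] at hi; omega
      · intro i hi; rw [Finset.mem_Icc] at hi; omega
      · intro i hi
        rw [Finset.mem_range] at hi
        have h1 : k - (k - i) = i := by omega
        rw [h1]
    rw [hsplit, hreidx] at hco
    exact hco.symm

end Aux

set_option synthInstance.maxHeartbeats 800000 in
/-- Let `R` be a Noetherian local domain, `I ⊆ R` a nonzero ideal, and
suppose the integral closure of the Rees algebra `R[It]` in `R[t]` is a finite `R[It]`-module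
(e.g. `R` excellent). Then there exists `n₀ ≥ 1` such that for all `n ≥ 1` the ideal
`(overline{I^{n₀}})^n` is integrally closed, where `overline{J}` is the integral closure of the
ideal `J`. -/
theorem exists_power_with_all_powers_of_closure_integrally_closed
    (R : Type*) [CommRing R] [IsDomain R] [IsNoetherianRing R] [IsLocalRing R]
    (I : Ideal R) (hI : I ≠ ⊥)
    (hfin : Module.Finite (reesAlgebra I)
      (integralClosure (reesAlgebra I) (Polynomial R))) :
    ∃ n₀ : ℕ, 0 < n₀ ∧
      ∀ Jbar : Ideal R, (Jbar : Set R) = {a : R | IsIntegralOverIdeal (I ^ n₀) a} →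
        ∀ n : ℕ, 1 ≤ n → ∀ a : R, IsIntegralOverIdeal (Jbar ^ n) a → a ∈ Jbar ^ n := by
  obtain ⟨n₀, hn₀, hver⟩ := veronese I hfin
  refine ⟨n₀, hn₀, ?_⟩
  intro Jbar hJbar n hn a ha
  have hJeq : Jbar = Abar I n₀ := by
    ext b
    have hb : b ∈ Jbar ↔ IsIntegralOverIdeal (I ^ n₀) b := by
      rw [← SetLike.mem_coe, hJbar]; rfl
    rw [hb]
    constructor
    · intro h
      exact mem_Abar_of_isIntegralOverIdeal I
        (fun i => by rw [← pow_mul]; exact pow_le_Abar I (n₀ * i)) h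
    · intro h
      exact isIntegralOverIdeal_of_mem I h
  subst hJeq
  have h1 : a ∈ Abar I (n₀ * n) :=
    mem_Abar_of_isIntegralOverIdeal I (J := (Abar I n₀) ^ n) (m := n₀ * n)
      (fun i => by
        rw [← pow_mul]
        exact (mul_assoc n₀ n i) ▸ Abar_pow_le I n₀ (n * i)) ha
  exact hver n hn h1
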